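/- For ω > 0, the difference of derivatives of Barnes' double zeta function satisfies G(ω,ω) - G(ω,1) = (1/2) log ω, where G(ω,z) = ∂/∂s ζ₂(s,ω,z)|_{s=0}. Equivalently, the double sine function satisfies S(ω,1) = ω^{1/2} and S(ω,ω) = ω^{-1/2}. -/

import Mathlib

open Complex Filter Set

/-- `H` is the meromorphic continuation of Barnes' double zeta function
`ζ₂(s,ω,z) = ∑_{p,q≥0} (z + pω + q)^{-s}`. -/
def IsBarnesZeta2 (ω z : ℝ) (H : ℂ → ℂ) : Prop :=
  DifferentiableOn ℂ H ({1, 2} : Set ℂ)ᶜ ∧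
    ∀ s : ℂ, 2 < s.re → H s = ∑' (p : ℕ) (q : ℕ), ((z : ℂ) + p * ω + q) ^ (-s)

/-- `S` is the value of the double sine function
`𝒮(ω,z) = exp(G(ω,1+ω-z) - G(ω,z))` where `G(ω,z) = ζ₂'(0,ω,z)`. -/
def IsDoubleSine (ω z : ℝ) (S : ℂ) : Prop :=
  ∃ H1 H2 : ℂ → ℂ, IsBarnesZeta2 ω (1 + ω - z) H1 ∧ IsBarnesZeta2 ω z H2 ∧
    S = Complex.exp (deriv H1 0 - deriv H2 0)

set_option maxHeartbeats 1000000 in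
lemma aux_summable {ω z : ℝ} (hω : 0 < ω) (hz : 0 ≤ z) {s : ℂ} (hs : 2 < s.re) :
    Summable (fun pq : ℕ × ℕ => (((z + pq.1 * ω + pq.2 : ℝ)) : ℂ) ^ (-s)) := by
  set σ := s.re with hσdef
  set r := σ / 2 with hrdef
  have hr : 1 < r := by rw [hrdef]; linarith
  set c := min ω 1 with hcdef
  have hc : 0 < c := lt_min hω one_pos
  have hc1 : c ≤ 1 := min_le_right _ _
  have hcω : c ≤ ω := min_le_left _ _
  have h1n : Summable fun n : ℕ => (c * (1 + (n:ℝ)) / 2) ^ (-r) := by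
    have h0 : Summable fun n : ℕ => ((n:ℝ)) ^ (-r) :=
      Real.summable_nat_rpow.mpr (by linarith)
    have h1 : Summable fun n : ℕ => ((1 + (n:ℝ))) ^ (-r) := by
      refine ((summable_nat_add_iff 1).mpr h0).congr fun n => ?_
      push_cast
      ring_nf
    refine (h1.mul_left ((c/2) ^ (-r))).congr fun n => ?_
    rw [← Real.mul_rpow (by positivity) (by positivity)]
    ring_nf
  have hmaj : Summable fun pq : ℕ × ℕ =>
      (c * (1 + (pq.1:ℝ)) / 2) ^ (-r) * (c * (1 + (pq.2:ℝ)) / 2) ^ (-r) :=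
    h1n.mul_of_nonneg h1n (fun n => by positivity) (fun n => by positivity)
  refine Summable.of_norm_bounded_eventually hmaj ?_
  rw [Filter.eventually_cofinite]
  refine Set.Finite.subset (Set.finite_singleton ((0,0) : ℕ × ℕ)) ?_
  rintro ⟨p, q⟩ hpq
  simp only [Set.mem_setOf_eq, not_le] at hpq
  simp only [Set.mem_singleton_iff]
  by_contra hne
  have hor : p ≠ 0 ∨ q ≠ 0 := by
    by_contra h
    push_neg at h
    exact hne (by simp [Prod.ext_iff, h.1, h.2])
  apply absurd hpq
  push_neg
  set x : ℝ := z + p * ω + q with hxdef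
  have hx : 0 < x := by
    have hpq' : (0:ℝ) < p * ω + q := by
      rcases hor with hp | hq
      · have : (1:ℝ) ≤ p := by exact_mod_cast Nat.one_le_iff_ne_zero.mpr hp
        nlinarith
      · have : (1:ℝ) ≤ q := by exact_mod_cast Nat.one_le_iff_ne_zero.mpr hq
        positivity
    linarith
  have key : ∀ a b : ℕ, (a ≠ 0 ∨ b ≠ 0) → c * (1 + (a:ℝ)) / 2 ≤ z + a * ω + b := by
    intro a b hab
    rcases Nat.eq_zero_or_pos a with ha | ha
    · subst ha
      have hb1 : (1:ℝ) ≤ b := by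
        exact_mod_cast Nat.one_le_iff_ne_zero.mpr (hab.resolve_left (by simp))
      simp only [Nat.cast_zero]
      nlinarith
    · have ha1 : (1:ℝ) ≤ a := by exact_mod_cast ha
      have hb0 : (0:ℝ) ≤ b := Nat.cast_nonneg b
      nlinarith
  have hbp : c * (1 + (p:ℝ)) / 2 ≤ x := key p q hor
  have hbq : c * (1 + (q:ℝ)) / 2 ≤ x := by
    rcases Nat.eq_zero_or_pos q with hq0 | hq0
    · subst hq0
      have hp1 : (1:ℝ) ≤ p := by
        exact_mod_cast Nat.one_le_iff_ne_zero.mpr (hor.resolve_right (by simp))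
      simp only [Nat.cast_zero, hxdef]
      nlinarith
    · have hq1 : (1:ℝ) ≤ q := by exact_mod_cast hq0
      have hp0 : (0:ℝ) ≤ (p:ℝ) * ω := by positivity
      rw [hxdef]
      nlinarith
  have hnorm : ‖((x:ℝ):ℂ) ^ (-s)‖ = x ^ (-σ) := by
    rw [Complex.norm_cpow_eq_rpow_re_of_pos hx, Complex.neg_re]
  rw [hnorm]
  have hsplit : x ^ (-σ) = x ^ (-r) * x ^ (-r) := by
    rw [← Real.rpow_add hx]
    ring_nf
    rw [hrdef]
    ring_nf
  rw [hsplit]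
  have h2 : ∀ y : ℝ, 0 < y → y ≤ x → x ^ (-r) ≤ y ^ (-r) := fun y hy hyx =>
    Real.rpow_le_rpow_of_nonpos hy hyx (by linarith)
  exact mul_le_mul (h2 _ (by positivity) hbp) (h2 _ (by positivity) hbq)
    (Real.rpow_nonneg hx.le _) (by positivity)

lemma barnes_sub {ω : ℝ} (hω : 0 < ω) {H1 H2 : ℂ → ℂ}
    (h1 : IsBarnesZeta2 ω ω H1) (h2 : IsBarnesZeta2 ω 1 H2) {s : ℂ} (hs : 2 < s.re) :
    H1 s - H2 s = ((ω : ℂ) ^ (-s) - 1) * riemannZeta s := by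
  set g : ℕ × ℕ → ℂ := fun pq => (((pq.1 * ω + pq.2 : ℝ)) : ℂ) ^ (-s) with hgdef
  have Sg : Summable g := by
    have := aux_summable hω le_rfl hs (z := 0)
    refine this.congr fun pq => ?_
    rw [hgdef]
    norm_num
  have hinjA : Function.Injective (fun pq : ℕ × ℕ => (pq.1 + 1, pq.2)) := by
    rintro ⟨a, b⟩ ⟨c, d⟩ h
    simp only [Prod.mk.injEq] at h
    exact Prod.ext (by omega) h.2
  have hinjB : Function.Injective (fun pq : ℕ × ℕ => (pq.1, pq.2 + 1)) := by
    rintro ⟨a, b⟩ ⟨c, d⟩ h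
    simp only [Prod.mk.injEq] at h
    exact Prod.ext h.1 (by omega)
  have SgA : Summable fun pq : ℕ × ℕ => g (pq.1 + 1, pq.2) := Sg.comp_injective hinjA
  have SgB : Summable fun pq : ℕ × ℕ => g (pq.1, pq.2 + 1) := Sg.comp_injective hinjB
  have hH1 : H1 s = ∑' pq : ℕ × ℕ, g (pq.1 + 1, pq.2) := by
    rw [h1.2 s hs, Summable.tsum_prod SgA]
    refine tsum_congr fun p => tsum_congr fun q => ?_
    rw [hgdef]
    push_cast
    ring_nf
  have hH2 : H2 s = ∑' pq : ℕ × ℕ, g (pq.1, pq.2 + 1) := by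
    rw [h2.2 s hs, Summable.tsum_prod SgB]
    refine tsum_congr fun p => tsum_congr fun q => ?_
    rw [hgdef]
    push_cast
    ring_nf
  have hζ0 : ∑' q : ℕ, g (0, q) = riemannZeta s := by
    rw [zeta_eq_tsum_one_div_nat_cpow (by linarith)]
    refine tsum_congr fun q => ?_
    rw [hgdef]
    push_cast
    rw [zero_mul, zero_add, Complex.cpow_neg, one_div]
  have hωζ : ∑' p : ℕ, g (p, 0) = (ω : ℂ) ^ (-s) * riemannZeta s := by
    have : ∀ p : ℕ, g (p, 0) = ((p:ℝ) : ℂ) ^ (-s) * ((ω:ℝ) : ℂ) ^ (-s) := by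
      intro p
      rw [hgdef]
      simp only [Nat.cast_zero, add_zero]
      rw [← Complex.mul_cpow_ofReal_nonneg (Nat.cast_nonneg p) hω.le, Complex.ofReal_mul]
    rw [tsum_congr this, tsum_mul_right]
    rw [zeta_eq_tsum_one_div_nat_cpow (by linarith)]
    rw [show ∑' (p : ℕ), ((p:ℝ) : ℂ) ^ (-s) = ∑' (n : ℕ), 1 / (n:ℂ) ^ s from
      tsum_congr fun n => by rw [Complex.cpow_neg, one_div]; norm_num]
    ring
  have split1 : ∑' pq, g pq = (∑' q : ℕ, g (0, q)) + ∑' pq : ℕ × ℕ, g (pq.1 + 1, pq.2) := by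
    rw [Summable.tsum_prod Sg, Summable.tsum_eq_zero_add Sg.prod]
    congr 1
    rw [Summable.tsum_prod SgA]
  have split2 : ∑' pq, g pq = (∑' p : ℕ, g (p, 0)) + ∑' pq : ℕ × ℕ, g (pq.1, pq.2 + 1) := by
    rw [Summable.tsum_prod Sg]
    have inner : ∀ p : ℕ, ∑' q, g (p, q) = g (p, 0) + ∑' q, g (p, q + 1) := fun p =>
      Summable.tsum_eq_zero_add (Sg.prod_factor p)
    have Sp0 : Summable fun p : ℕ => g (p, 0) :=
      Sg.comp_injective (i := fun p : ℕ => ((p, 0) : ℕ × ℕ))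
        (fun a b h => (Prod.ext_iff.mp h).1)
    rw [tsum_congr inner, Summable.tsum_add Sp0 SgB.prod]
    congr 1
    rw [Summable.tsum_prod SgB]
  rw [hH1, hH2]
  have e1 := split1
  rw [split2] at e1
  rw [hζ0] at e1
  rw [hωζ] at e1
  linear_combination -e1

lemma barnes_deriv_main {ω : ℝ} (hω : 0 < ω) {H1 H2 : ℂ → ℂ}
    (h1 : IsBarnesZeta2 ω ω H1) (h2 : IsBarnesZeta2 ω 1 H2) :
    deriv H1 0 - deriv H2 0 = ((Real.log ω / 2 : ℝ) : ℂ) := by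
  set U : Set ℂ := ({1, 2} : Set ℂ)ᶜ with hUdef
  have hUo : IsOpen U := by
    refine (Set.Finite.isClosed ?_).isOpen_compl
    exact (Set.finite_singleton _).insert _
  have hUc : IsPreconnected U := by
    have hcount : ({1, 2} : Set ℂ).Countable := ((Set.countable_singleton _).insert _)
    have hrank : 1 < Module.rank ℝ ℂ := by
      rw [Complex.rank_real_complex]
      norm_num
    exact (hcount.isPathConnected_compl_of_one_lt_rank hrank).isConnected.isPreconnected
  have hωC : (ω : ℂ) ≠ 0 := Complex.ofReal_ne_zero.mpr hω.ne'
  set F : ℂ → ℂ := fun s => ((ω : ℂ) ^ (-s) - 1) * riemannZeta s with hFdef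
  have hFd : DifferentiableOn ℂ F U := by
    intro s hsU
    have hs1 : s ≠ 1 := by
      intro h
      exact hsU (by rw [h]; exact Set.mem_insert _ _)
    refine DifferentiableAt.differentiableWithinAt ?_
    exact ((differentiableAt_id.neg.const_cpow (Or.inl hωC)).sub_const 1).mul
      (differentiableAt_riemannZeta hs1)
  have hGd : DifferentiableOn ℂ (fun s => H1 s - H2 s) U := h1.1.sub h2.1
  have hF : AnalyticOnNhd ℂ F U := hFd.analyticOnNhd hUo
  have hG : AnalyticOnNhd ℂ (fun s => H1 s - H2 s) U := hGd.analyticOnNhd hUo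
  have h3U : (3 : ℂ) ∈ U := by
    simp only [hUdef, Set.mem_compl_iff, Set.mem_insert_iff, Set.mem_singleton_iff]
    push_neg
    constructor <;> norm_num
  have h0U : (0 : ℂ) ∈ U := by
    simp only [hUdef, Set.mem_compl_iff, Set.mem_insert_iff, Set.mem_singleton_iff]
    push_neg
    constructor <;> norm_num
  have hhalf : IsOpen {s : ℂ | 2 < s.re} := isOpen_lt continuous_const Complex.continuous_re
  have hEvEq : (fun s => H1 s - H2 s) =ᶠ[nhds (3 : ℂ)] F := by
    refine Filter.eventuallyEq_of_mem (hhalf.mem_nhds (by norm_num)) fun s hs => ?_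
    exact barnes_sub hω h1 h2 hs
  have hEq : Set.EqOn (fun s => H1 s - H2 s) F U :=
    hG.eqOn_of_preconnected_of_eventuallyEq hF hUc h3U hEvEq
  have hd1 : DifferentiableAt ℂ H1 0 := h1.1.differentiableAt (hUo.mem_nhds h0U)
  have hd2 : DifferentiableAt ℂ H2 0 := h2.1.differentiableAt (hUo.mem_nhds h0U)
  have hderiv : deriv H1 0 - deriv H2 0 = deriv (fun s => H1 s - H2 s) 0 :=
    (deriv_sub hd1 hd2).symm
  have hEvEq0 : (fun s => H1 s - H2 s) =ᶠ[nhds (0 : ℂ)] F :=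
    Filter.eventuallyEq_of_mem (hUo.mem_nhds h0U) hEq
  rw [hderiv, hEvEq0.deriv_eq]
  -- compute deriv F 0
  set l : ℂ := ((Real.log ω : ℝ) : ℂ) with hldef
  have hFform : F = fun s => (Complex.exp (l * -s) - 1) * riemannZeta s := by
    funext s
    show ((ω:ℂ) ^ (-s) - 1) * riemannZeta s = _
    rw [Complex.cpow_def_of_ne_zero hωC, hldef, Complex.ofReal_log hω.le]
  have hexp : HasDerivAt (fun s : ℂ => Complex.exp (l * -s) - 1)
      (Complex.exp (l * -(0:ℂ)) * (l * -1)) 0 :=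
    (((hasDerivAt_id (0:ℂ)).neg.const_mul l).cexp).sub_const 1
  have hzeta : HasDerivAt riemannZeta (deriv riemannZeta 0) 0 :=
    (differentiableAt_riemannZeta (by norm_num)).hasDerivAt
  have hprod := hexp.mul hzeta
  rw [hFform, (show HasDerivAt (fun s : ℂ => (Complex.exp (l * -s) - 1) * riemannZeta s) _ 0 from hprod).deriv]
  simp only [neg_zero, mul_zero, Complex.exp_zero, one_mul, sub_self, zero_mul, add_zero,
    riemannZeta_zero, mul_neg_one]
  push_cast
  ring

lemma exp_half_log {ω : ℝ} (hω : 0 < ω) :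
    Complex.exp ((Real.log ω / 2 : ℝ) : ℂ) = (Real.sqrt ω : ℂ) := by
  rw [← Complex.ofReal_exp]
  norm_cast
  rw [← Real.log_sqrt hω.le, Real.exp_log (Real.sqrt_pos.mpr hω)]

/-- For `ω > 0`, `G(ω,ω) - G(ω,1) = (1/2) log ω`; equivalently
`𝒮(ω,1) = ω^{1/2}` and `𝒮(ω,ω) = ω^{-1/2}`. -/
theorem doubleSine_at_one_and_omega (ω : ℝ) (hω : 0 < ω)
    (H1 H2 : ℂ → ℂ) (h1 : IsBarnesZeta2 ω ω H1) (h2 : IsBarnesZeta2 ω 1 H2) :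
    deriv H1 0 - deriv H2 0 = ((Real.log ω / 2 : ℝ) : ℂ) ∧
    (∀ S : ℂ, IsDoubleSine ω 1 S → S = (Real.sqrt ω : ℂ)) ∧
    (∀ S : ℂ, IsDoubleSine ω ω S → S = ((Real.sqrt ω : ℝ) : ℂ)⁻¹) := by
  refine ⟨barnes_deriv_main hω h1 h2, ?_, ?_⟩
  · rintro S ⟨G1, G2, hA, hB, rfl⟩
    rw [show (1:ℝ) + ω - 1 = ω by ring] at hA
    rw [barnes_deriv_main hω hA hB, exp_half_log hω]
  · rintro S ⟨G1, G2, hA, hB, rfl⟩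
    rw [show (1:ℝ) + ω - ω = 1 by ring] at hA
    have h := barnes_deriv_main hω hB hA
    have : deriv G1 0 - deriv G2 0 = -((Real.log ω / 2 : ℝ) : ℂ) := by
      rw [← h]; ring
    rw [this, Complex.exp_neg, exp_half_log hω]
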